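/- Let (X, r) be a near-rack solution and suppose (z_i)_{i∈X} ⊂ k^× satisfies z_i² = z_j z_{σ_i(τ(j))} R_{i,τ(j)}/R_{τ(i),j} for all i, j ∈ X, where X is finite and R : X × X → k^× satisfies the scalar Yang–Baxter condition. Then for any i ∈ X with τ(i) = i one has z_i^{2|X|} = ∏_{j∈X} z_j², and for any i ∈ X one has (z_i z_{τ(i)})^{2|X|} = ∏_{j∈X} z_j⁴. -/
import Mathlib


def rFst {X : Type*} (r : X × X → X × X) : X × X × X → X × X × X :=
  fun p => ((r (p.1, p.2.1)).1, (r (p.1, p.2.1)).2, p.2.2)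

def rSnd {X : Type*} (r : X × X → X × X) : X × X × X → X × X × X :=
  fun p => (p.1, r (p.2.1, p.2.2))

def IsYB {X : Type*} (r : X × X → X × X) : Prop :=
  rFst r ∘ rSnd r ∘ rFst r = rSnd r ∘ rFst r ∘ rSnd r

/-- `(X, r)` is a near-rack solution of the Yang–Baxter equation with data `σ, τ`. -/
structure IsNearRackSolution {X : Type*} (r : X × X → X × X)
    (σ : X → X → X) (τ : X → X) : Prop where
  hr : ∀ x y : X, r (x, y) = (σ x y, τ x)
  hYB : IsYB r
  hrbij : Function.Bijective r
  hσbij : ∀ x : X, Function.Bijective (σ x)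
  hτbij : Function.Bijective τ
  hτ2 : τ ∘ τ = id
  hτne : τ ≠ id

theorem stmt18 {X : Type*} [Fintype X] {k : Type*} [Field k]
    (r : X × X → X × X) (σ : X → X → X) (τ : X → X)
    (h : IsNearRackSolution r σ τ)
    (R : X → X → k) (hR0 : ∀ i j : X, R i j ≠ 0)
    (hR : ∀ i j l : X,
      R i j * R (τ i) l * R (σ i j) (σ (τ i) l)
        = R j l * R i (σ j l) * R (τ i) (τ j))
    (z : X → k) (hz0 : ∀ i : X, z i ≠ 0)
    (hz : ∀ i j : X, z i ^ 2 = z j * z (σ i (τ j)) * (R i (τ j) / R (τ i) j)) :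
    (∀ i : X, τ i = i → z i ^ (2 * Fintype.card X) = ∏ j : X, z j ^ 2) ∧
      ∀ i : X, (z i * z (τ i)) ^ (2 * Fintype.card X) = ∏ j : X, z j ^ 4 := by
  have hτ2 : ∀ x, τ (τ x) = x := fun x => congrFun h.hτ2 x
  have hPne : ∀ i : X, (∏ j : X, R i j) ≠ 0 := fun i =>
    Finset.prod_ne_zero_iff.2 (fun j _ => hR0 i j)
  have key : ∀ i : X, z i ^ (2 * Fintype.card X)
      = (∏ j : X, z j) ^ 2 * ((∏ j : X, R i j) / (∏ j : X, R (τ i) j)) := by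
    intro i
    have h1 : z i ^ (2 * Fintype.card X) = ∏ _j : X, z i ^ 2 := by
      rw [Finset.prod_const, ← pow_mul, Finset.card_univ, mul_comm]
    have h2 : ∏ j : X, z (σ i (τ j)) = ∏ j : X, z j :=
      Fintype.prod_bijective (fun j => σ i (τ j))
        ((h.hσbij i).comp h.hτbij) _ _ (fun _ => rfl)
    have h3 : ∏ j : X, R i (τ j) = ∏ j : X, R i j :=
      Fintype.prod_bijective τ h.hτbij _ _ (fun _ => rfl)
    calc z i ^ (2 * Fintype.card X) = ∏ _j : X, z i ^ 2 := h1
      _ = ∏ j : X, (z j * z (σ i (τ j)) * (R i (τ j) / R (τ i) j)) :=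
          Finset.prod_congr rfl (fun j _ => hz i j)
      _ = (∏ j : X, z j) * (∏ j : X, z (σ i (τ j)))
            * ((∏ j : X, R i (τ j)) / (∏ j : X, R (τ i) j)) := by
          rw [Finset.prod_mul_distrib, Finset.prod_mul_distrib, Finset.prod_div_distrib]
      _ = (∏ j : X, z j) ^ 2 * ((∏ j : X, R i j) / (∏ j : X, R (τ i) j)) := by
          rw [h2, h3, sq]
  constructor
  · intro i hi
    rw [key i, hi, div_self (hPne i), mul_one, ← Finset.prod_pow]
  · intro i
    rw [mul_pow, key i, key (τ i), hτ2 i]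
    have e1 : (∏ j : X, R i j) / (∏ j : X, R (τ i) j)
        * ((∏ j : X, R (τ i) j) / (∏ j : X, R i j)) = 1 := by
      rw [div_mul_div_comm, mul_comm (∏ j : X, R i j), div_self (mul_ne_zero (hPne (τ i)) (hPne i))]
    calc (∏ j : X, z j) ^ 2 * ((∏ j : X, R i j) / ∏ j : X, R (τ i) j)
          * ((∏ j : X, z j) ^ 2 * ((∏ j : X, R (τ i) j) / ∏ j : X, R i j))
        = (∏ j : X, z j) ^ 4 * ((∏ j : X, R i j) / (∏ j : X, R (τ i) j)
            * ((∏ j : X, R (τ i) j) / (∏ j : X, R i j))) := by ring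
      _ = (∏ j : X, z j) ^ 4 := by rw [e1, mul_one]
      _ = ∏ j : X, z j ^ 4 := (Finset.prod_pow _ _ _).symm
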